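/- Let k be a field, r ≥ 1, and let μ₁ ≥ μ₂ ≥ ⋯ ≥ μ_{n₁} > 0 be a partition of r with conjugate partition n₁ ≥ ⋯ ≥ n_σ (so σ = μ₁). Let à = ∏_{i=1}^{n₁} k[[s_i]], regarded as a k[[t]]-algebra via t ↦ (s_1^{μ₁}, …, s_{n₁}^{μ_{n₁}}), and let λ = (s₁, …, s_{n₁}) ∈ Ã. Then there exists a unique chain of k[[t]]-submodules à = L₀ ⊃ L₁ ⊃ ⋯ ⊃ L_σ = t·à such that λ·L_j ⊆ L_{j+1} for all 0 ≤ j ≤ σ−1 and dim_k(L_{j−1}/L_j) = n_j for all 1 ≤ j ≤ σ; it is given by L_j = λ^j·à + t·Ã. -/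

import Mathlib

/-- The chain condition on `k[[t]]`-submodules of `Ã = ∏_{i=1}^{N} k[[sᵢ]]` appearing in the
normalization step of the parabolic BNR correspondence.  Here `Ã` is realized as
`Fin N → PowerSeries k`, with `k[[t]]`-structure given by a ring homomorphism
`φ : k[[t]] → Ã` (sending `t` to `(s₁^{μ 1}, …, s_N^{μ N})`), so that a `k[[t]]`-submodule
is a `k`-subspace closed under multiplication by every `φ g`.  The condition requires:
`L 0 = Ã`, `L σ = t·Ã`, the chain is strictly decreasing, each `L j` is a
`k[[t]]`-submodule, `λ·(L j) ⊆ L (j+1)` where `λ = (s₁, …, s_N)`, and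
`dim_k (L (j-1) / L j) = n j`. -/
def IsParabolicChain {k : Type*} [Field k] (N σ : ℕ) (n : ℕ → ℕ)
    (φ : PowerSeries k →+* (Fin N → PowerSeries k))
    (L : ℕ → Submodule k (Fin N → PowerSeries k)) : Prop :=
  L 0 = ⊤ ∧
  L σ = Submodule.map (LinearMap.mulLeft k (φ PowerSeries.X)) ⊤ ∧
  (∀ j < σ, L (j + 1) < L j) ∧
  (∀ j ≤ σ, ∀ g : PowerSeries k, ∀ x ∈ L j, φ g * x ∈ L j) ∧
  (∀ j < σ, ∀ x ∈ L j, (fun _ => PowerSeries.X : Fin N → PowerSeries k) * x ∈ L (j + 1)) ∧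
  (∀ j, 1 ≤ j → j ≤ σ →
    Module.finrank k (↥(L (j - 1)) ⧸ (L j).comap (L (j - 1)).subtype) = n j)

open PowerSeries Module

open PowerSeries Module

namespace ParAux

variable {k : Type*} [Field k] {N : ℕ}

lemma mem_map_mulLeft (c x : Fin N → PowerSeries k) :
    x ∈ Submodule.map (LinearMap.mulLeft k c) (⊤ : Submodule k (Fin N → PowerSeries k)) ↔
      ∀ i, c i ∣ x i := by
  constructor
  · rintro ⟨y, -, rfl⟩ i
    exact ⟨y i, rfl⟩
  · intro h
    refine ⟨fun i => (h i).choose, trivial, ?_⟩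
    funext i
    exact ((h i).choose_spec).symm

noncomputable def Lstd (k : Type*) [Field k] {N : ℕ} (d : Fin N → ℕ) (j : ℕ) :
    Submodule k (Fin N → PowerSeries k) :=
  Submodule.map (LinearMap.mulLeft k ((fun _ => X : Fin N → PowerSeries k) ^ j)) ⊤ ⊔
    Submodule.map (LinearMap.mulLeft k (fun i => (X : PowerSeries k) ^ d i)) ⊤

lemma mem_Lstd (d : Fin N → ℕ) (j : ℕ) (x : Fin N → PowerSeries k) :
    x ∈ Lstd k d j ↔ ∀ i, (X : PowerSeries k) ^ (min j (d i)) ∣ x i := by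
  constructor
  · intro hx
    rcases Submodule.mem_sup.1 hx with ⟨p, hp, q, hq, rfl⟩
    rw [mem_map_mulLeft] at hp hq
    intro i
    refine dvd_add (dvd_trans (pow_dvd_pow _ (min_le_left _ _)) ?_)
      (dvd_trans (pow_dvd_pow _ (min_le_right _ _)) (hq i))
    simpa [Pi.pow_apply] using hp i
  · intro h
    refine Submodule.mem_sup.2
      ⟨fun i => if j ≤ d i then x i else 0, ?_, fun i => if j ≤ d i then 0 else x i, ?_, ?_⟩
    · rw [mem_map_mulLeft]
      intro i
      simp only [Pi.pow_apply]
      split_ifs with hji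
      · have := h i; rwa [min_eq_left hji] at this
      · exact dvd_zero _
    · rw [mem_map_mulLeft]
      intro i
      split_ifs with hji
      · exact dvd_zero _
      · have := h i; rwa [min_eq_right (le_of_not_ge hji)] at this
    · funext i; by_cases hji : j ≤ d i <;> simp [hji]

lemma Lstd_antitone (d : Fin N → ℕ) {a b : ℕ} (hab : a ≤ b) : Lstd k d b ≤ Lstd k d a := by
  intro x hx
  rw [mem_Lstd] at hx ⊢
  intro i
  exact dvd_trans (pow_dvd_pow _ (by omega : min a (d i) ≤ min b (d i))) (hx i)

lemma quot_equiv (d : Fin N → ℕ) (j : ℕ) :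
    Nonempty ((↥(Lstd k d j) ⧸ (Lstd k d (j+1)).comap (Lstd k d j).subtype) ≃ₗ[k]
      ({i : Fin N // j + 1 ≤ d i} → k)) := by
  classical
  let f : ↥(Lstd k d j) →ₗ[k] ({i : Fin N // j + 1 ≤ d i} → k) :=
    { toFun := fun x p => coeff j (x.1 p.1)
      map_add' := by intro x y; funext p; simp
      map_smul' := by intro c x; funext p; simp }
  have hker : LinearMap.ker f = (Lstd k d (j+1)).comap (Lstd k d j).subtype := by
    ext x
    simp only [LinearMap.mem_ker, Submodule.mem_comap, Submodule.subtype_apply]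
    constructor
    · intro hx
      rw [mem_Lstd]
      intro i
      rw [X_pow_dvd_iff]
      intro m hm
      have hx2 := (mem_Lstd d j x.1).1 x.2 i
      rw [X_pow_dvd_iff] at hx2
      by_cases hmi : m < min j (d i)
      · exact hx2 m hmi
      · have hdj : j + 1 ≤ d i := by omega
        have hmj : m = j := by omega
        have := congrFun hx ⟨i, hdj⟩
        simpa [f, hmj] using this
    · intro hx
      funext p
      have hp := (mem_Lstd d (j+1) x.1).1 hx p.1
      rw [X_pow_dvd_iff] at hp
      exact hp j (by have := p.2; omega)
  have hsurj : Function.Surjective f := by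
    intro v
    refine ⟨⟨fun i => if h : j + 1 ≤ d i then (v ⟨i, h⟩) • (X : PowerSeries k) ^ j else 0, ?_⟩, ?_⟩
    · rw [mem_Lstd]
      intro i
      split_ifs with h
      · rw [smul_eq_C_mul]
        exact Dvd.dvd.mul_left (pow_dvd_pow _ (min_le_left _ _)) _
      · exact dvd_zero _
    · funext p
      simp [f, dif_pos p.2, coeff_X_pow, show j < d p.1 from p.2]
  exact ⟨(Submodule.quotEquivOfEq _ _ hker.symm).trans (f.quotKerEquivOfSurjective hsurj)⟩

lemma finrank_quot_congr {V : Type*} [AddCommGroup V] [Module k V]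
    {W W' U : Submodule k V} (h : W = W') :
    finrank k (↥W ⧸ U.comap W.subtype) = finrank k (↥W' ⧸ U.comap W'.subtype) := by
  subst h; rfl

lemma le_of_quot_finrank_eq {V : Type*} [AddCommGroup V] [Module k V]
    (A B : Submodule k V) (hAB : A ≤ B) (hfin : FiniteDimensional k (V ⧸ A))
    (h : finrank k (V ⧸ A) = finrank k (V ⧸ B)) : B ≤ A := by
  haveI := hfin
  have e := Submodule.quotientQuotientEquivQuotient A B hAB
  have h1 : finrank k ((V ⧸ A) ⧸ (B.map A.mkQ)) = finrank k (V ⧸ B) := e.finrank_eq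
  have h2 := Submodule.finrank_quotient_add_finrank (B.map A.mkQ)
  have h3 : finrank k (B.map A.mkQ) = 0 := by omega
  have h4 : B.map A.mkQ = ⊥ := by rwa [Submodule.finrank_eq_zero] at h3
  intro x hx
  have hx2 : A.mkQ x ∈ B.map A.mkQ := ⟨x, hx, rfl⟩
  rw [h4, Submodule.mem_bot] at hx2
  simpa [Submodule.mkQ_apply, Submodule.Quotient.mk_eq_zero] using hx2

end ParAux



/-- **(Lemma used in the proof of the parabolic BNR correspondence, Theorem 4.5:
the canonical filtration on the normalized local ring.)**
Let `k` be a field and `μ 1 ≥ ⋯ ≥ μ N > 0` a partition of `r` with conjugate partition `n`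
(so `σ = μ 1`).  Let `Ã = ∏_{i=1}^{N} k[[sᵢ]]`, a `k[[t]]`-algebra via
`t ↦ (s₁^{μ 1}, …, s_N^{μ N})` (the homomorphism `φ`, characterized on coefficients by
`hφ`), and let `λ = (s₁, …, s_N) ∈ Ã`.  Then there is a unique chain of `k[[t]]`-submodules
`Ã = L 0 ⊃ L 1 ⊃ ⋯ ⊃ L σ = t·Ã` with `λ·(L j) ⊆ L (j+1)` and
`dim_k (L (j-1)/L j) = n j`; it is given by `L j = λ^j·Ã + t·Ã`. -/
theorem parabolic_chain_exists_unique {k : Type*} [Field k]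
    (r N σ : ℕ) (hr : 1 ≤ r) (hN : 1 ≤ N)
    (μ : ℕ → ℕ)
    (hanti : ∀ i j, 1 ≤ i → i ≤ j → j ≤ N → μ j ≤ μ i)
    (hpos : ∀ i, 1 ≤ i → i ≤ N → 0 < μ i)
    (hsum : ∑ i ∈ Finset.Icc 1 N, μ i = r)
    (hσ : σ = μ 1)
    (n : ℕ → ℕ)
    (hn : ∀ j, n j = ((Finset.Icc 1 N).filter (fun i => j ≤ μ i)).card)
    (φ : PowerSeries k →+* (Fin N → PowerSeries k))
    (hφ : ∀ (g : PowerSeries k) (i : Fin N) (m : ℕ),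
      PowerSeries.coeff m (φ g i) =
        if μ (i.val + 1) ∣ m then PowerSeries.coeff (m / μ (i.val + 1)) g else 0) :
    (∃ L : ℕ → Submodule k (Fin N → PowerSeries k), IsParabolicChain N σ n φ L) ∧
    ∀ L : ℕ → Submodule k (Fin N → PowerSeries k), IsParabolicChain N σ n φ L →
      ∀ j ≤ σ, L j =
        Submodule.map
          (LinearMap.mulLeft k ((fun _ => PowerSeries.X : Fin N → PowerSeries k) ^ j)) ⊤ ⊔
        Submodule.map (LinearMap.mulLeft k (φ PowerSeries.X)) ⊤ := by
  classical
  set d : Fin N → ℕ := fun i => μ (i.val + 1) with hd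
  have hdσ : ∀ i : Fin N, d i ≤ σ := fun i => by
    rw [hσ, hd]; exact hanti 1 (i.val + 1) le_rfl (by omega) (by omega)
  have hdpos : ∀ i : Fin N, 0 < d i := fun i => hpos _ (by omega) (by omega)
  have hφX : φ X = fun i => (X : PowerSeries k) ^ d i := by
    funext i
    ext m
    rw [hφ, PowerSeries.coeff_X_pow]
    by_cases hm : m = d i
    · subst hm
      rw [if_pos (dvd_refl _), if_pos rfl, Nat.div_self (hdpos i), PowerSeries.coeff_X,
        if_pos rfl]
    · rw [if_neg hm]
      split_ifs with h1
      · rw [PowerSeries.coeff_X, if_neg]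
        intro h2
        obtain ⟨c, rfl⟩ := h1
        rw [Nat.mul_div_cancel_left _ (hdpos i)] at h2
        exact hm (by rw [h2, mul_one])
      · rfl
  set M : ℕ → Submodule k (Fin N → PowerSeries k) := ParAux.Lstd k d with hM
  -- chain properties for M
  have hM0 : M 0 = ⊤ := by
    rw [eq_top_iff]
    intro x _
    rw [hM, ParAux.mem_Lstd]
    intro i
    simp
  have hMσ : M σ = Submodule.map (LinearMap.mulLeft k (φ X)) ⊤ := by
    ext x
    rw [hM, ParAux.mem_Lstd, hφX, ParAux.mem_map_mulLeft]
    constructor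
    · intro h i
      have := h i
      rwa [min_eq_right (hdσ i)] at this
    · intro h i
      rw [min_eq_right (hdσ i)]
      exact h i
  have hMlt : ∀ j < σ, M (j + 1) < M j := by
    intro j hj
    refine lt_of_le_of_ne (ParAux.Lstd_antitone d (by omega)) ?_
    intro heq
    let i0 : Fin N := ⟨0, by omega⟩
    have hdi0 : d i0 = σ := by rw [hσ]
    have hy : (Pi.single i0 ((X : PowerSeries k) ^ j) : Fin N → PowerSeries k) ∈ M j := by
      rw [hM, ParAux.mem_Lstd]
      intro i
      by_cases hi : i = i0
      · subst hi
        rw [Pi.single_eq_same]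
        exact pow_dvd_pow _ (min_le_left _ _)
      · rw [Pi.single_eq_of_ne hi]
        exact dvd_zero _
    rw [← heq, hM, ParAux.mem_Lstd] at hy
    have := hy i0
    rw [Pi.single_eq_same, hdi0, min_eq_left (by omega), PowerSeries.X_pow_dvd_iff] at this
    have h0 := this j (by omega)
    rw [PowerSeries.coeff_X_pow, if_pos rfl] at h0
    exact one_ne_zero h0
  have hMmod : ∀ j, ∀ g : PowerSeries k, ∀ x ∈ M j, φ g * x ∈ M j := by
    intro j g x hx
    rw [hM, ParAux.mem_Lstd] at hx ⊢
    intro i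
    exact Dvd.dvd.mul_left (hx i) _
  have hMlam : ∀ j, ∀ x ∈ M j, (fun _ => X : Fin N → PowerSeries k) * x ∈ M (j + 1) := by
    intro j x hx
    rw [hM, ParAux.mem_Lstd] at hx ⊢
    intro i
    have h1 : (X : PowerSeries k) ^ (min j (d i) + 1) ∣ X * x i := by
      rw [pow_succ, mul_comm (X : PowerSeries k) (x i)]
      exact mul_dvd_mul (hx i) dvd_rfl
    exact dvd_trans (pow_dvd_pow _ (by omega : min (j+1) (d i) ≤ min j (d i) + 1)) h1
  have hcard : ∀ j, Fintype.card {i : Fin N // j ≤ d i} =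
      ((Finset.Icc 1 N).filter (fun i => j ≤ μ i)).card := by
    intro j
    rw [Fintype.card_subtype]
    apply Finset.card_bij (fun (i : Fin N) _ => i.val + 1)
    · intro a ha
      simp only [Finset.mem_filter, Finset.mem_univ, true_and] at ha
      simp only [Finset.mem_filter, Finset.mem_Icc]
      exact ⟨⟨by omega, by omega⟩, ha⟩
    · intro a _ b _ h
      exact Fin.ext (by omega)
    · intro b hb
      simp only [Finset.mem_filter, Finset.mem_Icc] at hb
      refine ⟨⟨b - 1, by omega⟩, ?_, show b - 1 + 1 = b by omega⟩
      simp only [Finset.mem_filter, Finset.mem_univ, true_and]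
      show j ≤ μ (b - 1 + 1)
      have hb1 : b - 1 + 1 = b := by omega
      rw [hb1]
      exact hb.2
  have hMdimaux : ∀ j : ℕ,
      finrank k (↥(M j) ⧸ (M (j+1)).comap (M j).subtype) = n (j + 1) ∧
      FiniteDimensional k (↥(M j) ⧸ (M (j+1)).comap (M j).subtype) := by
    intro j
    obtain ⟨e⟩ := ParAux.quot_equiv (k := k) d j
    refine ⟨?_, e.symm.finiteDimensional⟩
    rw [e.finrank_eq, finrank_fintype_fun_eq_card, hcard, hn]
  have hMdim : ∀ j, 1 ≤ j → j ≤ σ →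
      finrank k (↥(M (j - 1)) ⧸ (M j).comap (M (j - 1)).subtype) = n j := by
    intro j h1 _
    obtain ⟨j', rfl⟩ : ∃ j', j = j' + 1 := ⟨j - 1, by omega⟩
    exact (hMdimaux j').1
  have hMchain : IsParabolicChain N σ n φ M :=
    ⟨hM0, hMσ, hMlt, fun j _ => hMmod j, fun j _ => hMlam j, hMdim⟩
  refine ⟨⟨M, hMchain⟩, ?_⟩
  -- uniqueness
  intro L hL j hj
  obtain ⟨hL0, hLσ, hLlt, hLmod, hLlam, hLdim⟩ := hL
  have hmono : ∀ a b : ℕ, a ≤ b → b ≤ σ → L b ≤ L a := by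
    intro a b hab hbσ
    induction b with
    | zero => have : a = 0 := by omega
              subst this; exact le_rfl
    | succ b ih =>
      rcases Nat.lt_or_ge a (b+1) with h | h
      · exact le_trans (le_of_lt (hLlt b (by omega))) (ih (by omega) (by omega))
      · have : a = b + 1 := by omega
        subst this; exact le_rfl
  have hpow : ∀ m, m ≤ σ → ∀ a : Fin N → PowerSeries k,
      (fun _ => X : Fin N → PowerSeries k) ^ m * a ∈ L m := by
    intro m
    induction m with
    | zero => intro _ a; rw [hL0]; trivial
    | succ m ih =>
      intro hm a
      have heq : (fun _ => X : Fin N → PowerSeries k) ^ (m+1) * a =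
          (fun _ => X : Fin N → PowerSeries k) * ((fun _ => X : Fin N → PowerSeries k) ^ m * a) := by
        ring
      rw [heq]
      exact hLlam m (by omega) _ (ih (by omega) a)
  have key : ∀ j, j ≤ σ → L j = M j := by
    intro j
    induction j with
    | zero => intro _; rw [hL0, hM0]
    | succ j ih =>
      intro hj
      have hLj : L j = M j := ih (by omega)
      have hge : M (j+1) ≤ L (j+1) := by
        rw [hM]
        show ParAux.Lstd k d (j+1) ≤ L (j+1)
        apply sup_le
        · rintro x ⟨y, -, rfl⟩
          exact hpow (j+1) hj y
        · have h2 : Submodule.map (LinearMap.mulLeft k (fun i => (X : PowerSeries k) ^ d i))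
              (⊤ : Submodule k (Fin N → PowerSeries k)) = L σ := by
            rw [hLσ, hφX]
          rw [h2]
          exact hmono (j+1) σ hj le_rfl
      have hle : L (j+1) ≤ M (j+1) := by
        have hABle : (M (j+1)).comap (M j).subtype ≤ (L (j+1)).comap (M j).subtype :=
          Submodule.comap_mono hge
        have hfr2 : finrank k (↥(M j) ⧸ (L (j+1)).comap (M j).subtype) = n (j + 1) := by
          have h5 := hLdim (j+1) (by omega) hj
          have h6 : L (j + 1 - 1) = M j := by rw [show j + 1 - 1 = j from rfl, hLj]
          exact (ParAux.finrank_quot_congr (U := L (j+1)) h6).symm.trans h5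
        have hBA := ParAux.le_of_quot_finrank_eq _ _ hABle (hMdimaux j).2
          (((hMdimaux j).1).trans hfr2.symm)
        intro x hx
        have hxMj : x ∈ M j := hLj ▸ le_of_lt (hLlt j (by omega)) hx
        exact hBA (show (⟨x, hxMj⟩ : ↥(M j)) ∈ (L (j+1)).comap (M j).subtype from hx)
      exact le_antisymm hle hge
  rw [hφX]
  exact key j hj
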